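/- Define the binary entropy function h : ℝ → ℝ by h(x) = −x·log₂(x) − (1−x)·log₂(1−x) for x ∈ (0,1) and h(0) = h(1) = 0. Fix a natural number N ≥ 5, and for each natural number n ≥ 1 set qₙ = 1/√n, mₙ = 2n(1−qₙ)·cos(π/N)/(1 + cos(π/N)), and Lₙ = n·[h(qₙ) + qₙ·log₂(2N) + (1−qₙ)·h(cos(π/N))/(1 + cos(π/N))] + 6. Then lim_{n→∞} (mₙ − Lₙ)/n = [2·cos(π/N) − h(cos(π/N))]/(1 + cos(π/N)). -/

import Mathlib

/-- The binary entropy function, `h(x) = -x·log₂ x - (1-x)·log₂(1-x)` for `x ∈ (0,1)`,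
with `h(0) = h(1) = 0`. -/
noncomputable def binEnt (x : ℝ) : ℝ :=
  if x = 0 ∨ x = 1 then 0
  else -x * Real.logb 2 x - (1 - x) * Real.logb 2 (1 - x)

lemma binEnt_eq (x : ℝ) : binEnt x = Real.binEntropy x / Real.log 2 := by
  unfold binEnt
  rcases eq_or_ne x 0 with rfl | hx0
  · simp
  rcases eq_or_ne x 1 with rfl | hx1
  · simp
  rw [if_neg (by tauto), Real.binEntropy, Real.log_inv, Real.log_inv, Real.logb, Real.logb]
  ring

lemma tendsto_binEnt_zero (q : ℕ → ℝ) (hq0 : Filter.Tendsto q Filter.atTop (nhds 0)) :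
    Filter.Tendsto (fun n => binEnt (q n)) Filter.atTop (nhds 0) := by
  have h : Filter.Tendsto (fun n => Real.binEntropy (q n) / Real.log 2) Filter.atTop
      (nhds (Real.binEntropy 0 / Real.log 2)) :=
    ((Real.binEntropy_continuous.tendsto 0).comp hq0).div_const _
  simpa [binEnt_eq] using h

lemma tendsto_sqrt_atTop : Filter.Tendsto Real.sqrt Filter.atTop Filter.atTop := by
  have h := tendsto_rpow_atTop (y := (1/2 : ℝ)) (by norm_num)
  exact h.congr' <| by
    filter_upwards [Filter.eventually_ge_atTop (0:ℝ)] with x hx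
    exact (Real.sqrt_eq_rpow x).symm

theorem net_expansion_rate_limit
    (N : ℕ) (hN : 5 ≤ N)
    (q mlen L : ℕ → ℝ)
    (hq : ∀ n : ℕ, 1 ≤ n → q n = 1 / Real.sqrt n)
    (hm : ∀ n : ℕ, 1 ≤ n → mlen n =
      2 * n * (1 - q n) * Real.cos (Real.pi / N) / (1 + Real.cos (Real.pi / N)))
    (hL : ∀ n : ℕ, 1 ≤ n → L n =
      n * (binEnt (q n) + q n * Real.logb 2 (2 * N) +
        (1 - q n) * binEnt (Real.cos (Real.pi / N)) / (1 + Real.cos (Real.pi / N))) + 6) :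
    Filter.Tendsto (fun n : ℕ => (mlen n - L n) / n) Filter.atTop
      (nhds ((2 * Real.cos (Real.pi / N) - binEnt (Real.cos (Real.pi / N))) /
        (1 + Real.cos (Real.pi / N)))) := by
  set c := Real.cos (Real.pi / N) with hc
  have hNpos : (0 : ℝ) < N := by positivity
  have hN5 : (5 : ℝ) ≤ N := by exact_mod_cast hN
  have hcpos : 0 < c := by
    apply Real.cos_pos_of_mem_Ioo
    constructor
    · have : 0 < Real.pi / N := by positivity
      linarith [Real.pi_pos]
    · rw [div_lt_div_iff₀ hNpos two_pos]
      nlinarith [Real.pi_pos]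
  have h1c : (1 : ℝ) + c ≠ 0 := by linarith
  -- q → 0
  have hq0 : Filter.Tendsto q Filter.atTop (nhds 0) := by
    have hs : Filter.Tendsto (fun n : ℕ => Real.sqrt n) Filter.atTop Filter.atTop :=
      tendsto_sqrt_atTop.comp tendsto_natCast_atTop_atTop
    have h1 : Filter.Tendsto (fun n : ℕ => 1 / Real.sqrt n) Filter.atTop (nhds 0) := by
      rw [show (fun n : ℕ => 1 / Real.sqrt n) = (fun n : ℕ => Real.sqrt n)⁻¹ by funext n; simp [one_div]]
      exact hs.inv_tendsto_atTop
    exact h1.congr' <| by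
      filter_upwards [Filter.eventually_ge_atTop 1] with n hn
      exact (hq n hn).symm
  have hbq : Filter.Tendsto (fun n => binEnt (q n)) Filter.atTop (nhds 0) :=
    tendsto_binEnt_zero q hq0
  have h6 : Filter.Tendsto (fun n : ℕ => 6 / (n : ℝ)) Filter.atTop (nhds 0) := by
    simpa [div_eq_mul_inv] using tendsto_one_div_atTop_nhds_zero_nat.const_mul (6 : ℝ)
  -- the main limit
  have hmain : Filter.Tendsto
      (fun n : ℕ => 2 * (1 - q n) * c / (1 + c) -
        (binEnt (q n) + q n * Real.logb 2 (2 * N) +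
          (1 - q n) * binEnt c / (1 + c)) - 6 / (n : ℝ))
      Filter.atTop
      (nhds (2 * (1 - 0) * c / (1 + c) -
        (0 + 0 * Real.logb 2 (2 * N) + (1 - 0) * binEnt c / (1 + c)) - 0)) := by
    apply Filter.Tendsto.sub _ h6
    apply Filter.Tendsto.sub
    · exact ((((tendsto_const_nhds.sub hq0).const_mul 2).mul_const c).div_const _)
    · exact (hbq.add (hq0.mul_const _)).add
        (((tendsto_const_nhds.sub hq0).mul_const _).div_const _)
  have hval : 2 * (1 - 0) * c / (1 + c) -
      (0 + 0 * Real.logb 2 (2 * N) + (1 - 0) * binEnt c / (1 + c)) - 0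
      = (2 * c - binEnt c) / (1 + c) := by
    rw [sub_div]; ring
  rw [hval] at hmain
  apply hmain.congr'
  filter_upwards [Filter.eventually_ge_atTop 1] with n hn
  have hnR : (n : ℝ) ≠ 0 := by positivity
  rw [hm n hn, hL n hn]
  field_simp
  ring
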